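/- arXiv:2111.14630 — 5 statements merged into one kernel-verified Lean document; each statement's English description precedes it below -/
import Mathlib

section
/- For every real number c, every n ∈ ℕ, and every finite family of reals x : Fin n → ℝ, there exists a rational number q such that for all i, x i > (q : ℝ) if and only if x i > c. Consequently, any finite sample whose Boolean labels are given by the threshold classifier 1_{>c} (i.e., y i = decide (x i > c)) is perfectly classified by the threshold classifier 1_{>q} at some rational q. -/
/-- For every real `c`, every `n`, and every finite family of reals
`x : Fin n → ℝ`, there is a rational `q` such that for all `i`, `x i > q ↔ x i > c`;
consequently any sample labeled by the threshold classifier `1_{>c}` is perfectly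
classified by the threshold classifier `1_{>q}`. -/
theorem decision_stump_rational_threshold (c : ℝ) (n : ℕ) (x : Fin n → ℝ) :
    ∃ q : ℚ, (∀ i : Fin n, x i > (q : ℝ) ↔ x i > c) ∧
      ∀ y : Fin n → Bool, (∀ i, y i = decide (x i > c)) →
        ∀ i, decide (x i > (q : ℝ)) = y i := by
  obtain ⟨q, hq1, hq2⟩ : ∃ q : ℚ, c < (q : ℝ) ∧ ∀ i, c < x i → (q : ℝ) < x i := by
    by_cases h : (Finset.univ.filter (fun i => c < x i)).Nonempty
    · set M := (Finset.univ.filter (fun i => c < x i)).inf' h x with hM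
      have hcM : c < M := by
        obtain ⟨j, hj, hjeq⟩ := Finset.exists_mem_eq_inf' h x
        rw [hM, hjeq]
        exact (Finset.mem_filter.mp hj).2
      obtain ⟨q, hq1, hq2⟩ := exists_rat_btwn hcM
      refine ⟨q, hq1, fun i hi => lt_of_lt_of_le hq2 ?_⟩
      exact Finset.inf'_le x (Finset.mem_filter.mpr ⟨Finset.mem_univ i, hi⟩)
    · obtain ⟨q, hq1, _⟩ := exists_rat_btwn (lt_add_one c)
      refine ⟨q, hq1, fun i hi => absurd ?_ h⟩
      exact ⟨i, Finset.mem_filter.mpr ⟨Finset.mem_univ i, hi⟩⟩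
  have hiff : ∀ i : Fin n, x i > (q : ℝ) ↔ x i > c :=
    fun i => ⟨fun h => lt_trans hq1 h, fun h => hq2 i h⟩
  refine ⟨q, hiff, fun y hy i => ?_⟩
  rw [hy i]
  simp only [decide_eq_decide]; exact hiff i
end

section
/- Let D ⊆ I be a dense subset and let S = ((x_1,y_1),...,(x_n,y_n)) ∈ (X × Bool)^n be a sample. If there exists w ∈ I with H w (x_j) = y_j for all j (i.e., the sample is realizable by the presented class), then there exists c ∈ D with H c (x_j) = y_j for all j. Hence, in the realizable case, a search through a countable dense set of indices always terminates with an index of a hypothesis of empirical error 0, yielding an empirical risk minimizer. -/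
/-- With `H : I → X → Bool` continuous in the index and `D ⊆ I`
dense, any sample realizable by the presented class (some index `w` fits all the
labels) is also fit exactly (empirical error 0) by some index `c ∈ D`. -/
theorem dense_realizable_ERM {I X : Type*} [TopologicalSpace I]
    (H : I → X → Bool) (hH : ∀ x : X, Continuous fun i : I => H i x)
    (D : Set I) (hD : Dense D)
    (n : ℕ) (S : Fin n → X × Bool)
    (hreal : ∃ w : I, ∀ j : Fin n, H w (S j).1 = (S j).2) :
    ∃ c ∈ D, ∀ j : Fin n, H c (S j).1 = (S j).2 := by
  obtain ⟨w, hw⟩ := hreal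
  have hopen : IsOpen (⋂ j : Fin n, {i : I | H i (S j).1 = (S j).2}) := by
    apply isOpen_iInter_of_finite
    intro j
    exact (hH (S j).1).isOpen_preimage {(S j).2} (isOpen_discrete _)
  obtain ⟨c, hcU, hcD⟩ := hD.inter_open_nonempty _ hopen
    ⟨w, Set.mem_iInter.mpr hw⟩
  exact ⟨c, hcD, Set.mem_iInter.mp hcU⟩
end

section
/- Let I be nonempty, let D ⊆ I be a dense subset, and let S = ((x_1,y_1),...,(x_n,y_n)) ∈ (X × Bool)^n be any sample. Then there exists c ∈ D such that for every w ∈ I, the empirical error count of H c on S is less than or equal to the empirical error count of H w on S. In particular, the minimum empirical error over the whole class is attained at an ideal point. -/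
/-- With `I` nonempty, `H : I → X → Bool` continuous in the index
and `D ⊆ I` dense, for any sample `S` there is an ideal point `c ∈ D` whose
empirical error count on `S` is minimal over the whole class. -/
theorem dense_attains_min_empirical_error {I X : Type*} [TopologicalSpace I]
    [Nonempty I]
    (H : I → X → Bool) (hH : ∀ x : X, Continuous fun i : I => H i x)
    (D : Set I) (hD : Dense D)
    (n : ℕ) (S : Fin n → X × Bool) :
    ∃ c ∈ D, ∀ w : I,
      (Finset.univ.filter fun j : Fin n => H c (S j).1 ≠ (S j).2).card ≤
        (Finset.univ.filter fun j : Fin n => H w (S j).1 ≠ (S j).2).card := by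
  set err : I → ℕ :=
    fun i => (Finset.univ.filter fun j : Fin n => H i (S j).1 ≠ (S j).2).card with herr
  have hne : (Set.range err).Nonempty := Set.range_nonempty _
  obtain ⟨w, hw⟩ := Nat.sInf_mem hne
  set U : Set I := {i : I | ∀ j : Fin n, H i (S j).1 = H w (S j).1} with hUdef
  have hU : IsOpen U := by
    have : U = ⋂ j : Fin n, (fun i => H i (S j).1) ⁻¹' {H w (S j).1} := by
      ext i; simp [hUdef, Set.mem_iInter]
    rw [this]
    exact isOpen_iInter_of_finite fun j =>
      (hH _).isOpen_preimage _ (isOpen_discrete _)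
  have hwU : w ∈ U := fun j => rfl
  obtain ⟨c, hcD, hcU⟩ := hD.exists_mem_open hU ⟨w, hwU⟩
  have hcw : err c = err w := by
    simp only [herr]
    congr 1
    apply Finset.filter_congr
    intro j _
    rw [hcU j]
  refine ⟨c, hcD, fun i => ?_⟩
  have h1 : err c ≤ err i := by
    rw [hcw, hw]; exact Nat.sInf_le ⟨i, rfl⟩
  exact h1
end

section
/- Say that a code c halts on input 0 in exactly k steps if Nat.Partrec.Code.evaln k c 0 = none and Nat.Partrec.Code.evaln (k+1) c 0 is some value. For a code e with (e.eval 0).Dom, define h_e : Nat.Partrec.Code → Bool by h_e c = decide (∃ k, e halts on 0 in exactly k steps ∧ c halts on 0 in exactly k steps). Then the family F = {h_e : (e.eval 0).Dom} shatters no two-element set of codes: for all codes c₀, c₁ and all e, e' with (e.eval 0).Dom and (e'.eval 0).Dom, if h_e c₀ = true and h_e c₁ = false, then it is not the case that both h_{e'} c₀ = true and h_{e'} c₁ = true. Hence F has VC dimension at most 1. -/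
/-- A code `c` halts on input 0 in exactly `k` steps. -/
def HaltsExactly (c : Nat.Partrec.Code) (k : ℕ) : Prop :=
  Nat.Partrec.Code.evaln k c 0 = none ∧ (Nat.Partrec.Code.evaln (k + 1) c 0).isSome

/-- The classifier `h_e` associated to a (halting) code `e`:
`h_e c = decide (∃ k, e halts on 0 in exactly k steps ∧ c halts on 0 in exactly k steps)`. -/
noncomputable def hFam (e : Nat.Partrec.Code) (c : Nat.Partrec.Code) : Bool :=
  @decide (∃ k : ℕ, HaltsExactly e k ∧ HaltsExactly c k) (Classical.propDecidable _)

lemma haltsExactly_unique {c : Nat.Partrec.Code} {k k' : ℕ}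
    (h : HaltsExactly c k) (h' : HaltsExactly c k') : k = k' := by
  by_contra hne
  rcases Nat.lt_or_ge k k' with hlt | hge
  · obtain ⟨a, ha⟩ := Option.isSome_iff_exists.mp h.2
    have := Nat.Partrec.Code.evaln_mono (Nat.succ_le_of_lt hlt) ha
    rw [h'.1] at this; exact absurd this (by simp)
  · have hlt : k' < k := lt_of_le_of_ne hge (Ne.symm (by omega))
    obtain ⟨a, ha⟩ := Option.isSome_iff_exists.mp h'.2
    have := Nat.Partrec.Code.evaln_mono (Nat.succ_le_of_lt hlt) ha
    rw [h.1] at this; exact absurd this (by simp)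

/-- The family `{h_e : (e.eval 0).Dom}` shatters no two-element set
of codes: if `h_e c₀ = true` and `h_e c₁ = false` for some halting code `e`, then
no halting code `e'` gives `h_{e'} c₀ = true` and `h_{e'} c₁ = true`.
Hence the family has VC dimension at most 1. -/
theorem halting_time_class_no_two_point_shatter
    (c₀ c₁ e e' : Nat.Partrec.Code)
    (he : (e.eval 0).Dom) (he' : (e'.eval 0).Dom)
    (h₀ : hFam e c₀ = true) (h₁ : hFam e c₁ = false) :
    ¬ (hFam e' c₀ = true ∧ hFam e' c₁ = true) := by
  rintro ⟨h₀', h₁'⟩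
  unfold hFam at h₀ h₀' h₁' h₁
  obtain ⟨k, hek, hc₀k⟩ := @of_decide_eq_true _ (Classical.propDecidable _) h₀
  obtain ⟨k', he'k, hc₀k'⟩ := @of_decide_eq_true _ (Classical.propDecidable _) h₀'
  obtain ⟨k'', he'k'', hc₁k''⟩ := @of_decide_eq_true _ (Classical.propDecidable _) h₁'
  have h₁ := @of_decide_eq_false _ (Classical.propDecidable _) h₁
  have h1 : k' = k'' := haltsExactly_unique he'k he'k''
  subst h1
  have h2 : k = k' := haltsExactly_unique hc₀k hc₀k'
  subst h2
  exact h₁ ⟨k, hek, hc₁k''⟩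
end

section
/- Let X be a measurable space in which singletons are measurable, let x ∈ X and y ∈ Bool, and let D be the Dirac measure at (x, y) on X × Bool. Let m ∈ ℕ, let A : (Fin m → X × Bool) → X → Bool be a learner such that for every sample S the set {p ∈ X × Bool | A S p.1 ≠ p.2} is measurable and the set {S | D {p | A S p.1 ≠ p.2} ≤ ε} is measurable, and let ε, δ be reals with 0 ≤ ε < 1 and 0 ≤ δ < 1. If the m-fold product measure of D assigns measure at least 1 − δ to the set {S | D {p | A S p.1 ≠ p.2} ≤ ε}, then A applied to the constant sample (fun _ ↦ (x, y)) satisfies A (fun _ ↦ (x, y)) x = y. -/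
open MeasureTheory

lemma pi_dirac_aux {X : Type*} [MeasurableSpace X] (m : ℕ) (a : X) :
    Measure.pi (fun _ : Fin m => Measure.dirac a) =
      Measure.dirac (fun _ : Fin m => a) := by
  refine (Measure.pi_eq (μ := fun _ : Fin m => Measure.dirac a) fun s hs => ?_)
  rw [Measure.dirac_apply' _ (MeasurableSet.univ_pi hs)]
  by_cases h : ∀ i, a ∈ s i
  · rw [Set.indicator_of_mem (by simpa [Set.mem_univ_pi] using h)]
    simp only [Measure.dirac_apply' _ (hs _)]
    refine (Finset.prod_eq_one ?_).symm
    intro i _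
    simp [Set.indicator_of_mem (h i)]
  · push_neg at h
    obtain ⟨i, hi⟩ := h
    rw [Set.indicator_of_notMem (by simp [Set.mem_univ_pi]; exact ⟨i, hi⟩)]
    refine Eq.symm ?_ ; refine Finset.prod_eq_zero (Finset.mem_univ i) ?_
    rw [Measure.dirac_apply' _ (hs i), Set.indicator_of_notMem hi]

theorem pac_learner_on_pointmass_labels_correctly
    {X : Type*} [MeasurableSpace X] [MeasurableSingletonClass X]
    (x : X) (y : Bool) (m : ℕ)
    (A : (Fin m → X × Bool) → X → Bool)
    (ε δ : ℝ) (hε0 : 0 ≤ ε) (hε1 : ε < 1) (hδ0 : 0 ≤ δ) (hδ1 : δ < 1)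
    (D : Measure (X × Bool)) (hD : D = Measure.dirac (x, y))
    (hmeas1 : ∀ S : Fin m → X × Bool,
      MeasurableSet {p : X × Bool | A S p.1 ≠ p.2})
    (hmeas2 : MeasurableSet {S : Fin m → X × Bool |
      D {p : X × Bool | A S p.1 ≠ p.2} ≤ ENNReal.ofReal ε})
    (hPAC : ENNReal.ofReal (1 - δ) ≤
      Measure.pi (fun _ : Fin m => D)
        {S : Fin m → X × Bool |
          D {p : X × Bool | A S p.1 ≠ p.2} ≤ ENNReal.ofReal ε}) :
    A (fun _ => (x, y)) x = y := by
  subst hD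
  rw [pi_dirac_aux m (x, y), Measure.dirac_apply' _ hmeas2] at hPAC
  have hmem : (fun _ : Fin m => (x, y)) ∈ {S : Fin m → X × Bool |
      Measure.dirac (x, y) {p : X × Bool | A S p.1 ≠ p.2} ≤ ENNReal.ofReal ε} := by
    by_contra h
    rw [Set.indicator_of_notMem h] at hPAC
    simp only [nonpos_iff_eq_zero, ENNReal.ofReal_eq_zero] at hPAC
    linarith
  simp only [Set.mem_setOf_eq,
    Measure.dirac_apply' _ (hmeas1 (fun _ : Fin m => (x, y)))] at hmem
  by_contra h
  rw [Set.indicator_of_mem (by simpa using h)] at hmem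
  have : ENNReal.ofReal ε < 1 := by
    exact ENNReal.ofReal_lt_one.mpr hε1
  exact absurd (hmem.trans_lt this) (lt_irrefl _)
end
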